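/- arXiv:2409.16463 — 2 statements merged into one kernel-verified Lean document; each statement's English description precedes it below -/
import Mathlib

section
/- Double-robust moment condition under a correctly specified linear Y-model (model (a)): if the null hypothesis β₀ = β* holds and Y = Xβ* + Zᵀγ₀ + ε with X = f(Z) + η for an arbitrary (measurable, bounded on the support of Z) function f, then E[(W − Zᵀθ₀)(V − Zᵀγ₀) + σ_U²β*] = 0; equivalently, E[(f(Z) − Zᵀθ₀ + η + U)(ε − Uβ*) + σ_U²β*] = 0. -/
open MeasureTheory ProbabilityTheory Filter Real Matrix Finset

noncomputable section

/-- The standard normal cumulative distribution function `Φ`. -/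
def stdNormalCDF (t : ℝ) : ℝ :=
  (∫ x in Set.Iic t, Real.exp (-(x ^ 2) / 2)) / Real.sqrt (2 * Real.pi)

/-- The sub-Gaussian norm of `S` is at most `K`:
`‖S‖_{ψ₂} = sup_{q ≥ 1} q^{-1/2} (E|S|^q)^{1/q} ≤ K`. -/
def SubGNormLe {Ω : Type*} [MeasurableSpace Ω] (μ : Measure Ω) (S : Ω → ℝ) (K : ℝ) : Prop :=
  ∀ q : ℝ, 1 ≤ q → (∫ ω, |S ω| ^ q ∂μ) ^ (1 / q) ≤ K * Real.sqrt q

/-- The sub-exponential norm of `S` is at most `K`: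
`‖S‖_{ψ₁} = sup_{q ≥ 1} q⁻¹ (E|S|^q)^{1/q} ≤ K`. -/
def SubENormLe {Ω : Type*} [MeasurableSpace Ω] (μ : Measure Ω) (S : Ω → ℝ) (K : ℝ) : Prop :=
  ∀ q : ℝ, 1 ≤ q → (∫ ω, |S ω| ^ q ∂μ) ^ (1 / q) ≤ K * q

/-- Population Gram matrix `Σ_ZZ = E[Z Zᵀ]`. -/
def pGram {Ω : Type*} [MeasurableSpace Ω] (μ : Measure Ω) {p : ℕ} (Z : Ω → Fin p → ℝ) :
    Matrix (Fin p) (Fin p) ℝ :=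
  Matrix.of fun j k => ∫ ω, Z ω j * Z ω k ∂μ

/-- Population least-squares coefficient `(E[Z Zᵀ])⁻¹ E[Z R]`. -/
def pCoef {Ω : Type*} [MeasurableSpace Ω] (μ : Measure Ω) {p : ℕ} (Z : Ω → Fin p → ℝ)
    (R : Ω → ℝ) : Fin p → ℝ :=
  (pGram μ Z)⁻¹ *ᵥ fun j => ∫ ω, Z ω j * R ω ∂μ

/-- Sample Gram matrix `n⁻¹ Σᵢ Zᵢ Zᵢᵀ`. -/
def sGram {Ω : Type*} (p n : ℕ) (Z : ℕ → Ω → Fin p → ℝ) (ω : Ω) :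
    Matrix (Fin p) (Fin p) ℝ :=
  Matrix.of fun j k => (n : ℝ)⁻¹ * ∑ i ∈ Finset.range n, Z i ω j * Z i ω k

/-- Ordinary least squares estimator of the regression of `R` on `Z`. -/
def olsHat {Ω : Type*} (p n : ℕ) (Z : ℕ → Ω → Fin p → ℝ) (R : ℕ → Ω → ℝ) (ω : Ω) :
    Fin p → ℝ :=
  (sGram p n Z ω)⁻¹ *ᵥ fun j => (n : ℝ)⁻¹ * ∑ i ∈ Finset.range n, Z i ω j * R i ω

/-- The score statistic `T`. -/
def Tstat {Ω : Type*} (p n : ℕ) (Z : ℕ → Ω → Fin p → ℝ) (W V : ℕ → Ω → ℝ)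
    (θh γh : Ω → Fin p → ℝ) (σU2 βs : ℝ) (ω : Ω) : ℝ :=
  (Real.sqrt n)⁻¹ * ∑ i ∈ Finset.range n,
    ((W i ω - ∑ j, Z i ω j * θh ω j) * (V i ω - ∑ j, Z i ω j * γh ω j) + σU2 * βs)

/-- The variance estimator `σ̂²`. -/
def sigHat2 {Ω : Type*} (p n : ℕ) (Z : ℕ → Ω → Fin p → ℝ) (W V : ℕ → Ω → ℝ)
    (θh γh : Ω → Fin p → ℝ) (σU2 βs : ℝ) (ω : Ω) : ℝ :=
  (n : ℝ)⁻¹ * ∑ i ∈ Finset.range n,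
    ((W i ω - ∑ j, Z i ω j * θh ω j) * (V i ω - ∑ j, Z i ω j * γh ω j) + σU2 * βs) ^ 2

/-- The standardized statistic `T_DF = T / σ̂`. -/
def TDF {Ω : Type*} (p n : ℕ) (Z : ℕ → Ω → Fin p → ℝ) (W V : ℕ → Ω → ℝ)
    (θh γh : Ω → Fin p → ℝ) (σU2 βs : ℝ) (ω : Ω) : ℝ :=
  Tstat p n Z W V θh γh σU2 βs ω / Real.sqrt (sigHat2 p n Z W V θh γh σU2 βs ω)

/-- The penalized least-squares objective. -/
def penObj {Ω : Type*} (p n : ℕ) (Z : ℕ → Ω → Fin p → ℝ) (R : ℕ → Ω → ℝ)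
    (pen : ℝ → ℝ) (ω : Ω) (γ : Fin p → ℝ) : ℝ :=
  (2 * n : ℝ)⁻¹ * ∑ i ∈ Finset.range n, (R i ω - ∑ j, Z i ω j * γ j) ^ 2 + ∑ j, pen (γ j)


/-- double-robust moment condition under a correctly specified linear
`Y`-model (model (a)). -/
theorem statement0
    {Ω : Type*} [MeasurableSpace Ω] (μ : Measure Ω) [IsProbabilityMeasure μ]
    {p : ℕ}
    (X Y ε η U W V : Ω → ℝ) (Z : Ω → Fin p → ℝ)
    (f : (Fin p → ℝ) → ℝ) (σU2 σε2 ση2 βs : ℝ)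
    -- measurability
    (hmX : Measurable X) (hmY : Measurable Y) (hmε : Measurable ε)
    (hmη : Measurable η) (hmU : Measurable U) (hmZ : Measurable Z)
    (hmf : Measurable f)
    -- square integrability
    (hL2X : MemLp X 2 μ) (hL2Y : MemLp Y 2 μ) (hL2ε : MemLp ε 2 μ)
    (hL2η : MemLp η 2 μ) (hL2U : MemLp U 2 μ)
    (hL2Z : ∀ j, MemLp (fun ω => Z ω j) 2 μ)
    -- observed surrogate and pseudo-response
    (hW : ∀ ω, W ω = X ω + U ω)
    (hV : ∀ ω, V ω = Y ω - W ω * βs)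
    -- measurement error: mean zero, variance `σ_U²`, independent of `(X, Z, ε, η)`
    (hU0 : ∫ ω, U ω ∂μ = 0)
    (hUvar : ∫ ω, (U ω) ^ 2 ∂μ = σU2)
    (hUindep : IndepFun U (fun ω => (X ω, Z ω, ε ω, η ω)) μ)
    -- regression error `ε`: mean zero, variance `σ_ε²`, independent of `(X, Z)`
    (hε0 : ∫ ω, ε ω ∂μ = 0)
    (hεvar : ∫ ω, (ε ω) ^ 2 ∂μ = σε2)
    (hεindep : IndepFun ε (fun ω => (X ω, Z ω)) μ)
    -- error `η`: conditionally centered given `Z`, variance `σ_η²`, independent of `(U, ε)`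
    (hηcond : μ[η | MeasurableSpace.comap Z inferInstance] =ᵐ[μ] 0)
    (hηvar : ∫ ω, (η ω) ^ 2 ∂μ = ση2)
    (hηindep : IndepFun η (fun ω => (U ω, ε ω)) μ)
    -- model (a): the null `β₀ = β*` holds, the `Y`-model is linear with true coefficient `γ₀`,
    -- and `X = f(Z) + η` for an arbitrary measurable `f` bounded on the support of `Z`
    (γ0 : Fin p → ℝ)
    (hmodelY : ∀ ω, Y ω = X ω * βs + (∑ j, Z ω j * γ0 j) + ε ω)
    (hmodelX : ∀ ω, X ω = f (Z ω) + η ω)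
    (hfbd : ∃ M : ℝ, ∀ᵐ ω ∂μ, |f (Z ω)| ≤ M)
    -- population least-squares coefficient `θ₀ = Σ_ZZ⁻¹ E[Z W]`, `Σ_ZZ` invertible
    (hGram : IsUnit (pGram μ Z).det)
    (θ0 : Fin p → ℝ)
    (hθ0 : θ0 = pCoef μ Z W)
    -- integrability of the displayed products
    (hint1 : Integrable
      (fun ω => (W ω - ∑ j, Z ω j * θ0 j) * (V ω - ∑ j, Z ω j * γ0 j)) μ)
    (hint2 : Integrable
      (fun ω => (f (Z ω) - (∑ j, Z ω j * θ0 j) + η ω + U ω) * (ε ω - U ω * βs)) μ) :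
    (∫ ω, ((W ω - ∑ j, Z ω j * θ0 j) * (V ω - ∑ j, Z ω j * γ0 j) + σU2 * βs) ∂μ = 0) ∧
    (∫ ω, ((f (Z ω) - (∑ j, Z ω j * θ0 j) + η ω + U ω) * (ε ω - U ω * βs) + σU2 * βs) ∂μ
      = 0) := by
  classical
  -- abbreviations
  set S : Ω → ℝ := fun ω => ∑ j, Z ω j * θ0 j with hS
  set g : Ω → ℝ := fun ω => X ω - S ω with hg
  -- measurability of the Z-linear combination
  have hSmeas : Measurable S :=
    Finset.measurable_sum _ fun j _ => ((measurable_pi_apply j).comp hmZ).mul_const _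
  have hgmeas : Measurable g := hmX.sub hSmeas
  -- integrability
  have hXint : Integrable X μ := hL2X.integrable one_le_two
  have hεint : Integrable ε μ := hL2ε.integrable one_le_two
  have hUint : Integrable U μ := hL2U.integrable one_le_two
  have hSint : Integrable S μ := by
    apply integrable_finset_sum
    intro j _
    exact ((hL2Z j).integrable one_le_two).mul_const _
  have hgint : Integrable g μ := hXint.sub hSint
  -- independence facts
  have hεg : IndepFun ε g μ := by
    have hφ : Measurable (fun q : ℝ × (Fin p → ℝ) => q.1 - ∑ j, q.2 j * θ0 j) :=
      measurable_fst.sub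
        (Finset.measurable_sum _ fun j _ => ((measurable_pi_apply j).comp measurable_snd).mul_const _)
    exact hεindep.comp measurable_id hφ
  have hUg : IndepFun U g μ := by
    have hφ : Measurable (fun q : ℝ × ((Fin p → ℝ) × ℝ × ℝ) => q.1 - ∑ j, q.2.1 j * θ0 j) :=
      measurable_fst.sub
        (Finset.measurable_sum _ fun j _ =>
          ((measurable_pi_apply j).comp (measurable_fst.comp measurable_snd)).mul_const _)
    exact hUindep.comp measurable_id hφ
  have hUε : IndepFun U ε μ := by
    have hφ : Measurable (fun q : ℝ × ((Fin p → ℝ) × ℝ × ℝ) => q.2.2.1) :=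
      measurable_fst.comp (measurable_snd.comp measurable_snd)
    exact hUindep.comp measurable_id hφ
  -- integrability of products
  have h1 : Integrable (fun ω => g ω * ε ω) μ := hεg.symm.integrable_mul hgint hεint
  have h2 : Integrable (fun ω => g ω * U ω) μ := hUg.symm.integrable_mul hgint hUint
  have h3 : Integrable (fun ω => U ω * ε ω) μ := hUε.integrable_mul hUint hεint
  have h4 : Integrable (fun ω => U ω ^ 2) μ := hL2U.integrable_sq
  -- values of product integrals
  have hv1 : ∫ ω, g ω * ε ω ∂μ = 0 := by
    rw [hεg.symm.integral_fun_mul_eq_mul_integral hgmeas.aestronglyMeasurable hmε.aestronglyMeasurable, hε0, mul_zero]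
  have hv2 : ∫ ω, g ω * U ω ∂μ = 0 := by
    rw [hUg.symm.integral_fun_mul_eq_mul_integral hgmeas.aestronglyMeasurable hmU.aestronglyMeasurable, hU0, mul_zero]
  have hv3 : ∫ ω, U ω * ε ω ∂μ = 0 := by
    rw [hUε.integral_fun_mul_eq_mul_integral hmU.aestronglyMeasurable hmε.aestronglyMeasurable, hU0, zero_mul]
  -- pointwise identity for the second integrand
  have key : ∀ ω, (f (Z ω) - (∑ j, Z ω j * θ0 j) + η ω + U ω) * (ε ω - U ω * βs) + σU2 * βs
      = g ω * ε ω + (-βs) * (g ω * U ω)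
        + (U ω * ε ω + ((-βs) * U ω ^ 2 + σU2 * βs)) := by
    intro ω
    have hx : g ω = f (Z ω) - (∑ j, Z ω j * θ0 j) + η ω := by
      simp only [hg, hS, hmodelX ω]; ring
    rw [hx]; ring
  have h2' : Integrable (fun ω => (-βs) * (g ω * U ω)) μ := h2.const_mul _
  have h4' : Integrable (fun ω => (-βs) * U ω ^ 2) μ := h4.const_mul _
  have hI5 : Integrable (fun ω => (-βs) * U ω ^ 2 + σU2 * βs) μ :=
    h4'.add (integrable_const _)
  have hA : Integrable (fun ω => g ω * ε ω + (-βs) * (g ω * U ω)) μ := h1.add h2'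
  have hB : Integrable (fun ω => U ω * ε ω + ((-βs) * U ω ^ 2 + σU2 * βs)) μ := h3.add hI5
  -- second integral is zero
  have e2 : ∫ ω, ((f (Z ω) - (∑ j, Z ω j * θ0 j) + η ω + U ω) * (ε ω - U ω * βs)
      + σU2 * βs) ∂μ = 0 := by
    rw [integral_congr_ae (Filter.Eventually.of_forall key),
      integral_add hA hB, integral_add h1 h2', integral_add h3 hI5,
      integral_add h4' (integrable_const _),
      integral_const_mul, integral_const_mul, integral_const,
      hv1, hv2, hv3, hUvar]
    simp
    ring
  refine ⟨?_, e2⟩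
  -- first integrand coincides pointwise with the second
  have keq : ∀ ω, (W ω - ∑ j, Z ω j * θ0 j) * (V ω - ∑ j, Z ω j * γ0 j) + σU2 * βs
      = (f (Z ω) - (∑ j, Z ω j * θ0 j) + η ω + U ω) * (ε ω - U ω * βs) + σU2 * βs := by
    intro ω
    have h1' : W ω - ∑ j, Z ω j * θ0 j
        = f (Z ω) - (∑ j, Z ω j * θ0 j) + η ω + U ω := by
      rw [hW ω, hmodelX ω]; ring
    have h2' : V ω - ∑ j, Z ω j * γ0 j = ε ω - U ω * βs := by
      rw [hV ω, hmodelY ω, hW ω]; ring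
    rw [h1', h2']
  rw [integral_congr_ae (Filter.Eventually.of_forall keq)]
  exact e2

end
end

section
/- Double-robust moment condition under a correctly specified linear X-model (model (b)): if the null hypothesis β₀ = β* holds and Y = Xβ* + g(Z) + ε with X = Zᵀθ₀ + η, where g is an arbitrary (measurable, bounded on the support of Z) function, then E[(W − Zᵀθ₀)(V − Zᵀγ₀) + σ_U²β*] = 0; equivalently, E[(η + U)(ε − Uβ* + g(Z) − Zᵀγ₀) + σ_U²β*] = 0. -/
open MeasureTheory ProbabilityTheory Filter Real Matrix Finset

noncomputable section

/-- Product of two `L²` functions is integrable. -/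
lemma integrable_mul_of_memL2 {Ω : Type*} [MeasurableSpace Ω] {μ : Measure Ω}
    {f g : Ω → ℝ} (hf : MemLp f 2 μ) (hg : MemLp g 2 μ) :
    Integrable (fun ω => f ω * g ω) μ := by
  have h : MemLp (g • f) 1 μ := hf.smul hg (hpqr := ⟨by simp [ENNReal.inv_two_add_inv_two]⟩)
  rw [memLp_one_iff_integrable] at h
  exact h.congr (ae_of_all _ fun ω => by simp [mul_comm])

/-- double-robust moment condition under a correctly specified linear
`X`-model (model (b)). -/
theorem statement1
    {Ω : Type*} [MeasurableSpace Ω] (μ : Measure Ω) [IsProbabilityMeasure μ]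
    {p : ℕ}
    (X Y ε η U W V : Ω → ℝ) (Z : Ω → Fin p → ℝ)
    (g : (Fin p → ℝ) → ℝ) (σU2 σε2 ση2 βs : ℝ)
    -- measurability
    (hmX : Measurable X) (hmY : Measurable Y) (hmε : Measurable ε)
    (hmη : Measurable η) (hmU : Measurable U) (hmZ : Measurable Z)
    (hmg : Measurable g)
    -- square integrability
    (hL2X : MemLp X 2 μ) (hL2Y : MemLp Y 2 μ) (hL2ε : MemLp ε 2 μ)
    (hL2η : MemLp η 2 μ) (hL2U : MemLp U 2 μ)
    (hL2Z : ∀ j, MemLp (fun ω => Z ω j) 2 μ)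
    -- observed surrogate and pseudo-response
    (hW : ∀ ω, W ω = X ω + U ω)
    (hV : ∀ ω, V ω = Y ω - W ω * βs)
    -- measurement error: mean zero, variance `σ_U²`, independent of `(X, Z, ε, η)`
    (hU0 : ∫ ω, U ω ∂μ = 0)
    (hUvar : ∫ ω, (U ω) ^ 2 ∂μ = σU2)
    (hUindep : IndepFun U (fun ω => (X ω, Z ω, ε ω, η ω)) μ)
    -- regression error `ε`: mean zero, variance `σ_ε²`, independent of `(X, Z)`
    (hε0 : ∫ ω, ε ω ∂μ = 0)
    (hεvar : ∫ ω, (ε ω) ^ 2 ∂μ = σε2)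
    (hεindep : IndepFun ε (fun ω => (X ω, Z ω)) μ)
    -- error `η`: conditionally centered given `Z`, variance `σ_η²`, independent of `(U, ε)`
    (hηcond : μ[η | MeasurableSpace.comap Z inferInstance] =ᵐ[μ] 0)
    (hηvar : ∫ ω, (η ω) ^ 2 ∂μ = ση2)
    (hηindep : IndepFun η (fun ω => (U ω, ε ω)) μ)
    -- model (b): the null `β₀ = β*` holds, `Y = Xβ* + g(Z) + ε` for an arbitrary measurable
    -- `g` bounded on the support of `Z`, and `X = Zᵀθ₀ + η` is a correct linear model
    (θ0 : Fin p → ℝ)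
    (hmodelY : ∀ ω, Y ω = X ω * βs + g (Z ω) + ε ω)
    (hmodelX : ∀ ω, X ω = (∑ j, Z ω j * θ0 j) + η ω)
    (hgbd : ∃ M : ℝ, ∀ᵐ ω ∂μ, |g (Z ω)| ≤ M)
    -- population least-squares coefficient `γ₀ = Σ_ZZ⁻¹ E[Z V]`, `Σ_ZZ` invertible
    (hGram : IsUnit (pGram μ Z).det)
    (γ0 : Fin p → ℝ)
    (hγ0 : γ0 = pCoef μ Z V)
    -- integrability of the displayed products
    (hint1 : Integrable
      (fun ω => (W ω - ∑ j, Z ω j * θ0 j) * (V ω - ∑ j, Z ω j * γ0 j)) μ)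
    (hint2 : Integrable
      (fun ω => (η ω + U ω) * (ε ω - U ω * βs + g (Z ω) - ∑ j, Z ω j * γ0 j)) μ) :
    (∫ ω, ((W ω - ∑ j, Z ω j * θ0 j) * (V ω - ∑ j, Z ω j * γ0 j) + σU2 * βs) ∂μ = 0) ∧
    (∫ ω, ((η ω + U ω) * (ε ω - U ω * βs + g (Z ω) - ∑ j, Z ω j * γ0 j) + σU2 * βs) ∂μ
      = 0) := by
  classical
  -- notation
  set h : Ω → ℝ := fun ω => g (Z ω) - ∑ j, Z ω j * γ0 j with hh
  -- pointwise identities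
  have hWid : ∀ ω, W ω - ∑ j, Z ω j * θ0 j = η ω + U ω := by
    intro ω; rw [hW, hmodelX]; ring
  have hVid : ∀ ω, V ω - ∑ j, Z ω j * γ0 j
      = ε ω - U ω * βs + g (Z ω) - ∑ j, Z ω j * γ0 j := by
    intro ω; rw [hV, hmodelY, hW]; ring
  -- the two integrands coincide
  have hsame : (fun ω => (W ω - ∑ j, Z ω j * θ0 j) * (V ω - ∑ j, Z ω j * γ0 j) + σU2 * βs)
      = fun ω => (η ω + U ω) * (ε ω - U ω * βs + g (Z ω) - ∑ j, Z ω j * γ0 j) + σU2 * βs := by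
    funext ω; rw [hWid ω, hVid ω]
  -- L² facts
  have hL2gZ : MemLp (fun ω => g (Z ω)) 2 μ := by
    obtain ⟨M, hM⟩ := hgbd
    exact MemLp.of_bound ((hmg.comp hmZ).aestronglyMeasurable) M
      (hM.mono fun ω hω => by simpa [Real.norm_eq_abs] using hω)
  have hL2lin : MemLp (fun ω => ∑ j, Z ω j * γ0 j) 2 μ := by
    have hterm : ∀ j ∈ Finset.univ, MemLp (fun ω => Z ω j * γ0 j) 2 μ :=
      fun j _ => by simpa [mul_comm] using ((hL2Z j).const_mul (γ0 j))
    have hsum := memLp_finset_sum' Finset.univ hterm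
    have heq : (∑ j : Fin p, fun ω => Z ω j * γ0 j) = fun ω => ∑ j, Z ω j * γ0 j := by
      funext ω; simp
    rwa [heq] at hsum
  have hL2h : MemLp h 2 μ := hL2gZ.sub hL2lin
  -- integrability of all pieces
  have iηε : Integrable (fun ω => η ω * ε ω) μ := integrable_mul_of_memL2 hL2η hL2ε
  have iηh : Integrable (fun ω => η ω * h ω) μ := integrable_mul_of_memL2 hL2η hL2h
  have iηU : Integrable (fun ω => η ω * U ω) μ := integrable_mul_of_memL2 hL2η hL2U
  have iUε : Integrable (fun ω => U ω * ε ω) μ := integrable_mul_of_memL2 hL2U hL2ε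
  have iUh : Integrable (fun ω => U ω * h ω) μ := integrable_mul_of_memL2 hL2U hL2h
  have iUU : Integrable (fun ω => U ω * U ω) μ := integrable_mul_of_memL2 hL2U hL2U
  have iη : Integrable η μ := hL2η.integrable one_le_two
  have iε : Integrable ε μ := hL2ε.integrable one_le_two
  have iU : Integrable U μ := hL2U.integrable one_le_two
  -- E[η] = 0 via conditional expectation
  have hm : MeasurableSpace.comap Z inferInstance ≤ ‹MeasurableSpace Ω› := hmZ.comap_le
  haveI : SigmaFinite (μ.trim hm) := by
    have : IsFiniteMeasure (μ.trim hm) := isFiniteMeasure_trim hm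
    infer_instance
  have hη0 : ∫ ω, η ω ∂μ = 0 := by
    rw [← integral_condExp hm (f := η)]
    rw [integral_congr_ae hηcond]
    simp
  -- independence facts
  have hηU : IndepFun η U μ := by
    have := hηindep.comp measurable_id measurable_fst
    exact this
  have hηε : IndepFun η ε μ := by
    have := hηindep.comp measurable_id measurable_snd
    exact this
  have hUε : IndepFun U ε μ := by
    have := hUindep.comp measurable_id
      (measurable_fst.comp (measurable_snd.comp measurable_snd))
    exact this
  have hUh : IndepFun U h μ := by
    have hφ : Measurable (fun x : ℝ × (Fin p → ℝ) × ℝ × ℝ =>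
        g x.2.1 - ∑ j, x.2.1 j * γ0 j) := by
      apply Measurable.sub
      · exact hmg.comp (measurable_fst.comp measurable_snd)
      · exact Finset.measurable_sum Finset.univ fun j _ =>
          (((measurable_pi_apply j).comp (measurable_fst.comp measurable_snd)).mul_const _)
    have := hUindep.comp measurable_id hφ
    exact this
  -- expectations of the pieces
  have Eηε : ∫ ω, η ω * ε ω ∂μ = 0 := by
    have := hηε.integral_mul_eq_mul_integral iη.aestronglyMeasurable iε.aestronglyMeasurable
    simpa [hη0] using this
  have EηU : ∫ ω, η ω * U ω ∂μ = 0 := by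
    have := hηU.integral_mul_eq_mul_integral iη.aestronglyMeasurable iU.aestronglyMeasurable
    simpa [hη0] using this
  have EUε : ∫ ω, U ω * ε ω ∂μ = 0 := by
    have := hUε.integral_mul_eq_mul_integral iU.aestronglyMeasurable iε.aestronglyMeasurable
    simpa [hU0] using this
  have EUh : ∫ ω, U ω * h ω ∂μ = 0 := by
    have := hUh.integral_mul_eq_mul_integral iU.aestronglyMeasurable (hL2h.integrable one_le_two).aestronglyMeasurable
    simpa [hU0] using this
  have EUU : ∫ ω, U ω * U ω ∂μ = σU2 := by
    have : (fun ω => U ω * U ω) = fun ω => (U ω) ^ 2 := by funext ω; ring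
    rw [this, hUvar]
  -- E[η h(Z)] = 0 via the pull-out property
  have Eηh : ∫ ω, η ω * h ω ∂μ = 0 := by
    have hsm : StronglyMeasurable[MeasurableSpace.comap Z inferInstance] h := by
      have hZm : Measurable[MeasurableSpace.comap Z inferInstance] Z :=
        measurable_iff_comap_le.mpr le_rfl
      refine Measurable.stronglyMeasurable ?_
      apply Measurable.sub
      · exact hmg.comp hZm
      · exact Finset.measurable_sum Finset.univ fun j _ =>
          (((measurable_pi_apply j).comp hZm).mul_const _)
    have ihη : Integrable (h * η) μ := by
      have : (h * η) = fun ω => η ω * h ω := by funext ω; simp [mul_comm]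
      rw [this]; exact iηh
    have hpull := condExp_mul_of_stronglyMeasurable_left (m := MeasurableSpace.comap Z inferInstance)
      (μ := μ) hsm ihη iη
    have : ∫ ω, (h * η) ω ∂μ = 0 := by
      rw [← integral_condExp hm (f := h * η)]
      rw [integral_congr_ae hpull]
      have : (h * μ[η|MeasurableSpace.comap Z inferInstance]) =ᵐ[μ] 0 := by
        filter_upwards [hηcond] with ω hω
        simp [Pi.mul_apply, hω]
      rw [integral_congr_ae this]; simp
    calc ∫ ω, η ω * h ω ∂μ = ∫ ω, (h * η) ω ∂μ := by
          congr 1; funext ω; simp [mul_comm]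
      _ = 0 := this
  -- the main expectation
  have key : ∫ ω, (η ω + U ω) * (ε ω - U ω * βs + g (Z ω) - ∑ j, Z ω j * γ0 j) ∂μ
      = -(σU2 * βs) := by
    have hexp : (fun ω => (η ω + U ω) * (ε ω - U ω * βs + g (Z ω) - ∑ j, Z ω j * γ0 j))
        = fun ω => (η ω * ε ω + η ω * h ω + U ω * ε ω + U ω * h ω)
            - βs * (η ω * U ω + U ω * U ω) := by
      funext ω; simp only [hh]; ring
    rw [hexp]
    have i1 : Integrable (fun ω => η ω * ε ω + η ω * h ω) μ := iηε.add iηh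
    have i2 : Integrable (fun ω => η ω * ε ω + η ω * h ω + U ω * ε ω) μ := i1.add iUε
    have i3 : Integrable
        (fun ω => η ω * ε ω + η ω * h ω + U ω * ε ω + U ω * h ω) μ := i2.add iUh
    have i5 : Integrable (fun ω => η ω * U ω + U ω * U ω) μ := iηU.add iUU
    have i6 : Integrable (fun ω => βs * (η ω * U ω + U ω * U ω)) μ := i5.const_mul βs
    rw [integral_sub i3 i6, integral_add i2 iUh, integral_add i1 iUε,
      integral_add iηε iηh, integral_const_mul, integral_add iηU iUU]
    rw [Eηε, Eηh, EUε, EUh, EηU, EUU]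
    ring
  have main : ∫ ω, ((η ω + U ω) * (ε ω - U ω * βs + g (Z ω) - ∑ j, Z ω j * γ0 j)
      + σU2 * βs) ∂μ = 0 := by
    rw [integral_add hint2 (integrable_const _), key, integral_const]
    simp
  constructor
  · rw [hsame]; exact main
  · exact main

end
end
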